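/- arXiv:1011.4069 — 4 statements merged into one kernel-verified Lean document; each statement's English description precedes it below -/
import Mathlib

section
/- Let $N>1$, $1<p<\infty$, $p\ne N$, $\rho>0$. For $r\in[0,\rho]$ define $F(r)=\left(\int_r^\rho\theta^{\frac{1-N}{p-1}}d\theta\right)\left(\int_0^r s^{N-1}ds\right)^{\frac{1}{p-1}}$. Then $\left(\max_{0\le r\le\rho}F(r)\right)^{-(p-1)}=\frac{N^p}{(p-1)^{p-1}}\left(\frac{p}{N}\right)^{\frac{p(p-1)}{p-N}}\cdot\frac{1}{\rho^p}$. -/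
open Real

lemma amgm1 (c x : ℝ) (hc : 0 < c) (hx : 0 < x) :
    (1 - x) * x ^ c ≤ c ^ c / (1 + c) ^ (1 + c) := by
  have h1c : (0:ℝ) < 1 + c := by linarith
  rcases le_or_gt x 1 with hx1 | hx1
  · have ha : (0:ℝ) ≤ (1 + c) * (1 - x) := by nlinarith
    have hb : (0:ℝ) ≤ (1 + c) * x / c := by positivity
    have hw1 : (0:ℝ) ≤ 1 / (1 + c) := by positivity
    have hw2 : (0:ℝ) ≤ c / (1 + c) := by positivity
    have hw := Real.geom_mean_le_arith_mean2_weighted hw1 hw2 ha hb (by field_simp)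
    have hsum : 1 / (1 + c) * ((1 + c) * (1 - x)) + c / (1 + c) * ((1 + c) * x / c) = 1 := by
      field_simp; ring
    rw [hsum] at hw
    have h2 := Real.rpow_le_rpow (by positivity) hw h1c.le
    rw [Real.one_rpow, Real.mul_rpow (Real.rpow_nonneg ha _) (Real.rpow_nonneg hb _),
      ← Real.rpow_mul ha, ← Real.rpow_mul hb,
      show 1 / (1 + c) * (1 + c) = 1 by field_simp,
      show c / (1 + c) * (1 + c) = c by field_simp,
      Real.rpow_one, mul_div_assoc, Real.mul_rpow h1c.le (by positivity),
      Real.div_rpow hx.le hc.le] at h2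
    have hcc : (0:ℝ) < c ^ c := Real.rpow_pos_of_pos hc c
    rw [le_div_iff₀ (by positivity), Real.rpow_add h1c, Real.rpow_one]
    calc (1 - x) * x ^ c * ((1 + c) * (1 + c) ^ c)
        = (1 + c) * (1 - x) * ((1 + c) ^ c * (x ^ c / c ^ c)) * c ^ c := by
          field_simp
      _ ≤ 1 * c ^ c := mul_le_mul_of_nonneg_right h2 hcc.le
      _ = c ^ c := one_mul _
  · have h0 : (1 - x) * x ^ c ≤ 0 :=
      mul_nonpos_of_nonpos_of_nonneg (by linarith) (Real.rpow_nonneg hx.le c)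
    exact h0.trans (by positivity)

lemma amgm2 (d x : ℝ) (hd : 1 < d) (hx : 0 < x) :
    (x - 1) * x ^ (-d) ≤ (d - 1) ^ (d - 1) / d ^ d := by
  have hd0 : (0:ℝ) < d := by linarith
  have hd1 : (0:ℝ) < d - 1 := by linarith
  rcases le_or_gt x 1 with hx1 | hx1
  · have h0 : (x - 1) * x ^ (-d) ≤ 0 :=
      mul_nonpos_of_nonpos_of_nonneg (by linarith) (Real.rpow_nonneg hx.le _)
    exact h0.trans (by positivity)
  · have ha : (0:ℝ) ≤ d * (x - 1) := by nlinarith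
    have hb : (0:ℝ) ≤ d / (d - 1) := by positivity
    have hw := Real.geom_mean_le_arith_mean2_weighted
      (by positivity : (0:ℝ) ≤ 1 / d) (by positivity : (0:ℝ) ≤ (d - 1) / d) ha hb
      (by field_simp; ring)
    have hsum : 1 / d * (d * (x - 1)) + (d - 1) / d * (d / (d - 1)) = x := by
      field_simp; ring
    rw [hsum] at hw
    have h2 := Real.rpow_le_rpow (by positivity) hw hd0.le
    rw [Real.mul_rpow (Real.rpow_nonneg ha _) (Real.rpow_nonneg hb _),
      ← Real.rpow_mul ha, ← Real.rpow_mul hb,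
      show 1 / d * d = 1 by field_simp,
      show (d - 1) / d * d = d - 1 by field_simp,
      Real.rpow_one, Real.div_rpow hd0.le hd1.le] at h2
    have hxd : (0:ℝ) < x ^ d := Real.rpow_pos_of_pos hx d
    have hdd1 : (0:ℝ) < (d - 1) ^ (d - 1) := Real.rpow_pos_of_pos hd1 _
    rw [Real.rpow_neg hx.le, mul_inv_le_iff₀ hxd, div_mul_eq_mul_div, le_div_iff₀ (by positivity)]
    calc (x - 1) * d ^ d = d * (x - 1) * (d ^ (d - 1) / (d - 1) ^ (d - 1)) * (d - 1) ^ (d - 1) := by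
          have e : d ^ d = d ^ (1:ℝ) * d ^ (d - 1) := by
            rw [← Real.rpow_add hd0]; norm_num
          rw [e, Real.rpow_one]; field_simp
      _ ≤ x ^ d * (d - 1) ^ (d - 1) := mul_le_mul_of_nonneg_right h2 hdd1.le
      _ = (d - 1) ^ (d - 1) * x ^ d := mul_comm _ _

lemma keyIneq (Nr p x : ℝ) (hN : 1 < Nr) (hp : 1 < p) (hpN : p ≠ Nr) (hx : 0 < x) :
    (1 - x) * x ^ (Nr / (p - Nr)) / ((p - Nr) / (p - 1)) ≤
      (p - 1) / p * (Nr / p) ^ (Nr / (p - Nr)) := by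
  have hN0 : (0:ℝ) < Nr := by linarith
  have hp0 : (0:ℝ) < p := by linarith
  have hp1 : (0:ℝ) < p - 1 := by linarith
  rcases lt_or_gt_of_ne hpN with hlt | hgt
  · have hNp0 : (0:ℝ) < Nr - p := by linarith
    have hd : 1 < Nr / (Nr - p) := (one_lt_div hNp0).mpr (by linarith)
    have key := amgm2 (Nr / (Nr - p)) x hd hx
    have hcd : Nr / (p - Nr) = -(Nr / (Nr - p)) := by
      rw [show p - Nr = -(Nr - p) by ring, div_neg]
    rw [hcd]
    have hLHS : (1 - x) * x ^ (-(Nr / (Nr - p))) / ((p - Nr) / (p - 1)) =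
        (x - 1) * x ^ (-(Nr / (Nr - p))) / ((Nr - p) / (p - 1)) := by
      rw [show (p - Nr) / (p - 1) = -((Nr - p) / (p - 1)) by ring, div_neg]
      ring
    rw [hLHS]
    have hβ : (0:ℝ) < (Nr - p) / (p - 1) := div_pos hNp0 hp1
    have hconst : ((Nr / (Nr - p) - 1) ^ (Nr / (Nr - p) - 1) / (Nr / (Nr - p)) ^ (Nr / (Nr - p)))
        / ((Nr - p) / (p - 1)) = (p - 1) / p * (Nr / p) ^ (-(Nr / (Nr - p))) := by
      rw [Real.rpow_neg (by positivity), Real.div_rpow hN0.le hp0.le,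
        Real.div_rpow hN0.le hNp0.le,
        show Nr / (Nr - p) - 1 = p / (Nr - p) by field_simp; ring,
        Real.div_rpow hp0.le hNp0.le,
        show Nr / (Nr - p) = 1 + p / (Nr - p) by field_simp; ring,
        Real.rpow_add hN0, Real.rpow_add hNp0, Real.rpow_add hp0, Real.rpow_one]
      have h1 : (0:ℝ) < (Nr - p) ^ (p / (Nr - p)) := Real.rpow_pos_of_pos hNp0 _
      have h2 : (0:ℝ) < Nr ^ (p / (Nr - p)) := Real.rpow_pos_of_pos hN0 _
      have h3 : (0:ℝ) < p ^ (p / (Nr - p)) := Real.rpow_pos_of_pos hp0 _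
      simp only [Real.rpow_one]
      field_simp
    calc (x - 1) * x ^ (-(Nr / (Nr - p))) / ((Nr - p) / (p - 1))
        ≤ ((Nr / (Nr - p) - 1) ^ (Nr / (Nr - p) - 1) / (Nr / (Nr - p)) ^ (Nr / (Nr - p)))
            / ((Nr - p) / (p - 1)) := by
          exact (div_le_div_iff_of_pos_right hβ).mpr key
      _ = (p - 1) / p * (Nr / p) ^ (-(Nr / (Nr - p))) := hconst
  · have hpN0 : (0:ℝ) < p - Nr := by linarith
    have hc : (0:ℝ) < Nr / (p - Nr) := div_pos hN0 hpN0
    have key := amgm1 (Nr / (p - Nr)) x hc hx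
    have hβ : (0:ℝ) < (p - Nr) / (p - 1) := div_pos hpN0 hp1
    have hconst : ((Nr / (p - Nr)) ^ (Nr / (p - Nr)) / (1 + Nr / (p - Nr)) ^ (1 + Nr / (p - Nr)))
        / ((p - Nr) / (p - 1)) = (p - 1) / p * (Nr / p) ^ (Nr / (p - Nr)) := by
      rw [Real.div_rpow hN0.le hp0.le,
        Real.div_rpow hN0.le hpN0.le,
        show (1:ℝ) + Nr / (p - Nr) = p / (p - Nr) by field_simp; ring,
        Real.div_rpow hp0.le hpN0.le,
        show p / (p - Nr) = 1 + Nr / (p - Nr) by field_simp; ring,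
        Real.rpow_add hp0, Real.rpow_add hpN0, Real.rpow_one]
      have h1 : (0:ℝ) < (p - Nr) ^ (Nr / (p - Nr)) := Real.rpow_pos_of_pos hpN0 _
      have h2 : (0:ℝ) < Nr ^ (Nr / (p - Nr)) := Real.rpow_pos_of_pos hN0 _
      have h3 : (0:ℝ) < p ^ (Nr / (p - Nr)) := Real.rpow_pos_of_pos hp0 _
      simp only [Real.rpow_one]
      field_simp
    calc (1 - x) * x ^ (Nr / (p - Nr)) / ((p - Nr) / (p - 1))
        ≤ ((Nr / (p - Nr)) ^ (Nr / (p - Nr)) / (1 + Nr / (p - Nr)) ^ (1 + Nr / (p - Nr)))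
            / ((p - Nr) / (p - 1)) := by
          exact (div_le_div_iff_of_pos_right hβ).mpr key
      _ = (p - 1) / p * (Nr / p) ^ (Nr / (p - Nr)) := hconst

theorem stmt_4 (N : ℕ) (hN : 1 < N) (p ρ : ℝ) (hp : 1 < p) (hpN : p ≠ (N : ℝ)) (hρ : 0 < ρ)
    (F : ℝ → ℝ)
    (hF : ∀ r : ℝ, F r =
      (∫ θ in r..ρ, θ ^ ((1 - (N : ℝ)) / (p - 1))) *
        (∫ s in (0 : ℝ)..r, s ^ ((N : ℝ) - 1)) ^ (1 / (p - 1))) :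
    (⨆ r : Set.Icc (0 : ℝ) ρ, F r) ^ (-(p - 1)) =
      (N : ℝ) ^ p / (p - 1) ^ (p - 1) * ((p / N) ^ (p * (p - 1) / (p - N))) * (1 / ρ ^ p) := by
  have hNR : (1:ℝ) < (N:ℝ) := by exact_mod_cast hN
  have hN0 : (0:ℝ) < (N:ℝ) := by linarith
  have hp1 : (0:ℝ) < p - 1 := by linarith
  have hp0 : (0:ℝ) < p := by linarith
  have hpN' : p - (N:ℝ) ≠ 0 := sub_ne_zero.mpr hpN
  set c : ℝ := (N:ℝ) / (p - (N:ℝ)) with hc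
  set β : ℝ := (p - (N:ℝ)) / (p - 1) with hβ
  have hβne : β ≠ 0 := div_ne_zero hpN' hp1.ne'
  set K : ℝ := (p - 1) / p * ((N:ℝ) / p) ^ c with hK
  set M : ℝ := ρ ^ (p / (p - 1)) * K * (N:ℝ) ^ (-(1 / (p - 1))) with hM
  have hK0 : (0:ℝ) < K :=
    mul_pos (div_pos hp1 hp0) (Real.rpow_pos_of_pos (div_pos hN0 hp0) _)
  have hM0 : (0:ℝ) < M :=
    mul_pos (mul_pos (Real.rpow_pos_of_pos hρ _) hK0) (Real.rpow_pos_of_pos hN0 _)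
  -- value of F on (0, ρ]
  have hFval : ∀ r : ℝ, 0 < r → r ≤ ρ →
      F r = ρ ^ (p / (p - 1)) * ((1 - (r/ρ) ^ β) * ((r/ρ) ^ β) ^ c / β) *
        (N:ℝ) ^ (-(1 / (p - 1))) := by
    intro r hr hrρ
    have hne : (1 - (N:ℝ)) / (p - 1) ≠ -1 := by
      intro h
      apply hpN
      field_simp at h
      linarith
    have hmem : (0:ℝ) ∉ Set.uIcc r ρ := Set.notMem_uIcc_of_lt hr hρ
    have hI1 : (∫ θ in r..ρ, θ ^ ((1 - (N:ℝ)) / (p - 1))) = (ρ ^ β - r ^ β) / β := by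
      rw [integral_rpow (Or.inr ⟨hne, hmem⟩),
        show (1 - (N:ℝ)) / (p - 1) + 1 = β by rw [hβ]; field_simp <;> ring]
    have hI2 : (∫ s in (0:ℝ)..r, s ^ ((N:ℝ) - 1)) = r ^ (N:ℝ) / (N:ℝ) := by
      rw [integral_rpow (Or.inl (by linarith)), show (N:ℝ) - 1 + 1 = (N:ℝ) by ring,
        Real.zero_rpow (by positivity), sub_zero]
    rw [hF r, hI1, hI2]
    have hx0 : (0:ℝ) < r / ρ := div_pos hr hρ
    have e1 : ((r/ρ) ^ β) ^ c = r ^ ((N:ℝ)/(p-1)) / ρ ^ ((N:ℝ)/(p-1)) := by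
      rw [← Real.rpow_mul hx0.le, show β * c = (N:ℝ)/(p-1) by rw [hβ, hc]; field_simp <;> ring,
        Real.div_rpow hr.le hρ.le]
    have e2 : (r/ρ) ^ β = r ^ β / ρ ^ β := Real.div_rpow hr.le hρ.le β
    have e3 : (r ^ (N:ℝ) / (N:ℝ)) ^ (1/(p-1)) =
        r ^ ((N:ℝ)/(p-1)) * (N:ℝ) ^ (-(1/(p-1))) := by
      rw [Real.div_rpow (Real.rpow_nonneg hr.le _) hN0.le, ← Real.rpow_mul hr.le, mul_one_div,
        Real.rpow_neg hN0.le, div_eq_mul_inv]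
    have e4 : ρ ^ (p/(p-1)) = ρ ^ β * ρ ^ ((N:ℝ)/(p-1)) := by
      rw [← Real.rpow_add hρ]; congr 1; rw [hβ]; field_simp <;> ring
    rw [e3, e1, e2, e4]
    have hρβ : (0:ℝ) < ρ ^ β := Real.rpow_pos_of_pos hρ β
    have hρm : (0:ℝ) < ρ ^ ((N:ℝ)/(p-1)) := Real.rpow_pos_of_pos hρ _
    field_simp
  have hzero : F 0 = 0 := by
    rw [hF 0, intervalIntegral.integral_same, Real.zero_rpow (one_div_ne_zero hp1.ne'), mul_zero]
  have hub : ∀ r : ℝ, r ∈ Set.Icc (0:ℝ) ρ → F r ≤ M := by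
    rintro r ⟨hr0, hrρ⟩
    rcases eq_or_lt_of_le hr0 with h | h
    · rw [← h, hzero]; exact hM0.le
    · rw [hFval r h hrρ, hM, hK, hc, hβ]
      have hx : 0 < (r/ρ) ^ β := Real.rpow_pos_of_pos (div_pos h hρ) β
      have hkey := keyIneq (N:ℝ) p ((r/ρ) ^ β) hNR hp hpN hx
      exact mul_le_mul_of_nonneg_right
        (mul_le_mul_of_nonneg_left hkey (Real.rpow_nonneg hρ.le _))
        (Real.rpow_nonneg hN0.le _)
  -- the maximizer
  set rstar : ℝ := ρ * ((N:ℝ)/p) ^ ((1:ℝ)/β) with hrstar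
  have hrs0 : 0 < rstar := mul_pos hρ (Real.rpow_pos_of_pos (div_pos hN0 hp0) _)
  have hrsρ : rstar ≤ ρ := by
    have h1 : ((N:ℝ)/p) ^ ((1:ℝ)/β) ≤ 1 := by
      rcases lt_or_gt_of_ne hpN with hlt | hgt
      · exact Real.rpow_le_one_of_one_le_of_nonpos ((one_le_div hp0).mpr hlt.le)
          (le_of_lt (one_div_neg.mpr (div_neg_of_neg_of_pos (by linarith) hp1)))
      · exact Real.rpow_le_one (by positivity) ((div_le_one hp0).mpr hgt.le)
          (le_of_lt (one_div_pos.mpr (div_pos (by linarith) hp1)))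
    calc rstar = ρ * ((N:ℝ)/p) ^ ((1:ℝ)/β) := rfl
      _ ≤ ρ * 1 := mul_le_mul_of_nonneg_left h1 hρ.le
      _ = ρ := mul_one ρ
  have hxs : (rstar/ρ) ^ β = (N:ℝ)/p := by
    rw [hrstar, mul_div_cancel_left₀ _ hρ.ne', ← Real.rpow_mul (by positivity),
      one_div, inv_mul_cancel₀ hβne, Real.rpow_one]
  have hFrs : F rstar = M := by
    rw [hFval rstar hrs0 hrsρ, hxs, hM, hK]
    congr 1
    congr 1
    rw [hβ]
    field_simp
  -- supremum
  have hnonempty : Nonempty (Set.Icc (0:ℝ) ρ) := ⟨⟨0, le_refl 0, hρ.le⟩⟩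
  have hsup : (⨆ r : Set.Icc (0:ℝ) ρ, F r) = M := by
    apply le_antisymm
    · exact ciSup_le fun r => hub r r.2
    · have hmem : rstar ∈ Set.Icc (0:ℝ) ρ := ⟨hrs0.le, hrsρ⟩
      have hbdd : BddAbove (Set.range fun r : Set.Icc (0:ℝ) ρ => F r) := by
        refine ⟨M, ?_⟩
        rintro y ⟨r, rfl⟩
        exact hub r r.2
      have h := le_ciSup hbdd (⟨rstar, hmem⟩ : Set.Icc (0:ℝ) ρ)
      simpa [hFrs] using h
  rw [hsup, hM, hK, hc]
  -- final computation
  have n1 : (0:ℝ) ≤ ρ ^ (p/(p-1)) := (Real.rpow_pos_of_pos hρ _).le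
  have n2 : (0:ℝ) ≤ (p-1)/p := (div_pos hp1 hp0).le
  have n3 : (0:ℝ) ≤ ((N:ℝ)/p) ^ ((N:ℝ)/(p-(N:ℝ))) :=
    (Real.rpow_pos_of_pos (div_pos hN0 hp0) _).le
  rw [Real.mul_rpow (mul_nonneg n1 (mul_nonneg n2 n3)) (Real.rpow_nonneg hN0.le _),
    Real.mul_rpow n1 (mul_nonneg n2 n3),
    Real.mul_rpow n2 n3]
  have E1 : (ρ ^ (p/(p-1))) ^ (-(p-1)) = 1/ρ ^ p := by
    rw [← Real.rpow_mul hρ.le, show p/(p-1) * (-(p-1)) = -p by field_simp <;> ring,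
      Real.rpow_neg hρ.le, one_div]
  have E2 : ((N:ℝ) ^ (-(1/(p-1)))) ^ (-(p-1)) = (N:ℝ) := by
    rw [← Real.rpow_mul hN0.le, show -(1/(p-1)) * (-(p-1)) = 1 by field_simp, Real.rpow_one]
  have E3 : ((p-1)/p) ^ (-(p-1)) = p ^ (p-1) / (p-1) ^ (p-1) := by
    rw [Real.rpow_neg n2, Real.div_rpow hp1.le hp0.le, inv_div]
  have E4 : (((N:ℝ)/p) ^ ((N:ℝ)/(p-(N:ℝ)))) ^ (-(p-1)) =
      (p/(N:ℝ)) ^ ((N:ℝ)*(p-1)/(p-(N:ℝ))) := by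
    rw [← Real.rpow_mul (div_pos hN0 hp0).le,
      show (N:ℝ)/(p-(N:ℝ)) * (-(p-1)) = -((N:ℝ)*(p-1)/(p-(N:ℝ))) by field_simp,
      Real.rpow_neg (div_pos hN0 hp0).le,
      show (N:ℝ)/p = (p/(N:ℝ))⁻¹ by rw [inv_div],
      Real.inv_rpow (div_pos hp0 hN0).le, inv_inv]
  rw [E1, E2, E3, E4]
  have E5 : (p/(N:ℝ)) ^ (p*(p-1)/(p-(N:ℝ))) =
      (p/(N:ℝ)) ^ ((N:ℝ)*(p-1)/(p-(N:ℝ))) * (p ^ (p-1) / (N:ℝ) ^ (p-1)) := by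
    rw [← Real.div_rpow hp0.le hN0.le, ← Real.rpow_add (div_pos hp0 hN0)]
    congr 1
    field_simp
    ring
  have E6 : (N:ℝ) ^ p = (N:ℝ) ^ (p-1) * (N:ℝ) := by
    have h : p - 1 + 1 = p := by ring
    conv_lhs => rw [← h]
    rw [Real.rpow_add hN0, Real.rpow_one]
  rw [E5, E6]
  have z1 : ((N:ℝ)) ^ (p-1) ≠ 0 := (Real.rpow_pos_of_pos hN0 _).ne'
  have z2 : ((p-1):ℝ) ^ (p-1) ≠ 0 := (Real.rpow_pos_of_pos hp1 _).ne'
  have z3 : ρ ^ p ≠ 0 := (Real.rpow_pos_of_pos hρ _).ne'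
  field_simp
end

section
/- Let $N>1$, $p=N$, $\rho>0$. For $r\in[0,\rho]$ define $F(r)=\left(\int_r^\rho\theta^{-1}d\theta\right)\left(\frac{r^N}{N}\right)^{\frac{1}{N-1}}$. Then $\left(\max_{0\le r\le\rho}F(r)\right)^{-(N-1)}=\frac{N^N}{(N-1)^{N-1}}e^{N-1}\cdot\frac{1}{\rho^N}$. -/
open Real

lemma log_le_div_exp {x : ℝ} (hx : 0 < x) : Real.log x ≤ x / Real.exp 1 := by
  have h := Real.log_le_sub_one_of_pos (show 0 < x / Real.exp 1 by positivity)
  rw [Real.log_div (ne_of_gt hx) (ne_of_gt (Real.exp_pos 1)), Real.log_exp] at h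
  linarith

lemma key_ineq {α ρ r : ℝ} (hα : 0 < α) (hr : 0 < r) (hrρ : r ≤ ρ) :
    Real.log (ρ / r) * r ^ α ≤ α⁻¹ * (Real.exp 1)⁻¹ * ρ ^ α := by
  have hρ : 0 < ρ := lt_of_lt_of_le hr hrρ
  set s : ℝ := (ρ / r) ^ α with hs
  have hs0 : 0 < s := Real.rpow_pos_of_pos (by positivity) _
  have hlog : Real.log (ρ / r) = α⁻¹ * Real.log s := by
    rw [hs, Real.log_rpow (by positivity)]
    field_simp
  have hrα : r ^ α = ρ ^ α / s := by
    rw [hs, Real.div_rpow hρ.le hr.le]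
    field_simp
  rw [hlog, hrα]
  have h1 : Real.log s ≤ s * (Real.exp 1)⁻¹ := by
    have := log_le_div_exp hs0
    rwa [div_eq_mul_inv] at this
  have h2 : Real.log s * (ρ ^ α / s) ≤ (Real.exp 1)⁻¹ * ρ ^ α := by
    have hρα : (0 : ℝ) < ρ ^ α := Real.rpow_pos_of_pos hρ _
    rw [mul_div_assoc', div_le_iff₀ hs0]
    calc Real.log s * ρ ^ α ≤ s * (Real.exp 1)⁻¹ * ρ ^ α := by
          exact mul_le_mul_of_nonneg_right h1 hρα.le
      _ = (Real.exp 1)⁻¹ * ρ ^ α * s := by ring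
  calc α⁻¹ * Real.log s * (ρ ^ α / s) = α⁻¹ * (Real.log s * (ρ ^ α / s)) := by ring
    _ ≤ α⁻¹ * ((Real.exp 1)⁻¹ * ρ ^ α) := by
        exact mul_le_mul_of_nonneg_left h2 (by positivity)
    _ = α⁻¹ * (Real.exp 1)⁻¹ * ρ ^ α := by ring

theorem stmt_5 (N : ℕ) (hN : 1 < N) (ρ : ℝ) (hρ : 0 < ρ)
    (F : ℝ → ℝ)
    (hF : ∀ r : ℝ, F r =
      (∫ θ in r..ρ, θ⁻¹) * (r ^ (N : ℝ) / N) ^ (1 / ((N : ℝ) - 1))) :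
    (⨆ r : Set.Icc (0 : ℝ) ρ, F r) ^ (-((N : ℝ) - 1)) =
      (N : ℝ) ^ (N : ℝ) / ((N : ℝ) - 1) ^ ((N : ℝ) - 1) * Real.exp 1 ^ ((N : ℝ) - 1)
        * (1 / ρ ^ (N : ℝ)) := by
  have hn : (1 : ℝ) < (N : ℝ) := by exact_mod_cast hN
  set n : ℝ := (N : ℝ) with hndef
  have hn0 : (0 : ℝ) < n := by linarith
  have hn1 : (0 : ℝ) < n - 1 := by linarith
  set β : ℝ := 1 / (n - 1) with hβdef
  have hβ0 : (0 : ℝ) < β := by positivity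
  have hnβ : n * β = n / (n - 1) := by rw [hβdef]; ring
  have hnβ0 : (0 : ℝ) < n * β := by positivity
  set M : ℝ := (n - 1) / n * Real.exp (-1) * (ρ ^ n / n) ^ β with hMdef
  have hM0 : 0 < M := by
    apply mul_pos (mul_pos (by positivity) (Real.exp_pos _))
    exact Real.rpow_pos_of_pos (by positivity) _
  -- pointwise bound
  have hbound : ∀ r ∈ Set.Icc (0 : ℝ) ρ, F r ≤ M := by
    intro r hr
    obtain ⟨hr0, hrρ⟩ := hr
    rcases eq_or_lt_of_le hr0 with h0 | h0
    · rw [hF, ← h0, Real.zero_rpow (ne_of_gt hn0), zero_div,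
        Real.zero_rpow (ne_of_gt hβ0), mul_zero]
      exact hM0.le
    · rw [hF, integral_inv_of_pos h0 hρ]
      have hrw : (r ^ n / n) ^ β = r ^ (n * β) / n ^ β := by
        rw [Real.div_rpow (Real.rpow_nonneg h0.le _) hn0.le, ← Real.rpow_mul h0.le]
      have hrw2 : (ρ ^ n / n) ^ β = ρ ^ (n * β) / n ^ β := by
        rw [Real.div_rpow (Real.rpow_nonneg hρ.le _) hn0.le, ← Real.rpow_mul hρ.le]
      have hkey := key_ineq hnβ0 h0 hrρ
      have hinv : (n * β)⁻¹ = (n - 1) / n := by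
        rw [hnβ]; field_simp
      rw [hrw, hMdef, hrw2, Real.exp_neg]
      have hnb : (0 : ℝ) < n ^ β := Real.rpow_pos_of_pos hn0 _
      calc Real.log (ρ / r) * (r ^ (n * β) / n ^ β)
          = Real.log (ρ / r) * r ^ (n * β) / n ^ β := by ring
        _ ≤ (n * β)⁻¹ * (Real.exp 1)⁻¹ * ρ ^ (n * β) / n ^ β := by gcongr
        _ = (n - 1) / n * (Real.exp 1)⁻¹ * (ρ ^ (n * β) / n ^ β) := by
            rw [hinv]; ring
  -- the maximizer
  set r₀ : ℝ := ρ * Real.exp (-((n - 1) / n)) with hr₀def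
  have hr₀0 : 0 < r₀ := mul_pos hρ (Real.exp_pos _)
  have hr₀ρ : r₀ ≤ ρ := by
    rw [hr₀def]
    exact mul_le_of_le_one_right hρ.le
      (Real.exp_le_one_iff.mpr (neg_nonpos.mpr (by positivity)))
  have hmem : r₀ ∈ Set.Icc (0 : ℝ) ρ := ⟨hr₀0.le, hr₀ρ⟩
  have hval : F r₀ = M := by
    rw [hF, integral_inv_of_pos hr₀0 hρ]
    have h1 : ρ / r₀ = Real.exp ((n - 1) / n) := by
      rw [hr₀def, Real.exp_neg]
      field_simp
    have h2 : r₀ ^ n = ρ ^ n * Real.exp (-(n - 1)) := by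
      rw [hr₀def, Real.mul_rpow hρ.le (Real.exp_pos _).le, ← Real.exp_mul]
      congr 2
      field_simp
    have h3 : (r₀ ^ n / n) ^ β = (ρ ^ n / n) ^ β * Real.exp (-1) := by
      rw [h2, mul_div_right_comm,
        Real.mul_rpow (by positivity) (Real.exp_pos _).le, ← Real.exp_mul]
      congr 2
      rw [hβdef]; field_simp
    rw [h1, Real.log_exp, h3, hMdef]
    ring
  -- compute the supremum
  haveI : Nonempty (Set.Icc (0 : ℝ) ρ) := Set.nonempty_Icc_subtype hρ.le
  have hsup : (⨆ r : Set.Icc (0 : ℝ) ρ, F r) = M := by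
    apply le_antisymm
    · exact ciSup_le fun r => hbound r r.2
    · calc M = F (⟨r₀, hmem⟩ : Set.Icc (0 : ℝ) ρ) := hval.symm
        _ ≤ ⨆ r : Set.Icc (0 : ℝ) ρ, F r :=
            le_ciSup (f := fun r : Set.Icc (0 : ℝ) ρ => F r)
              ⟨M, by rintro x ⟨r, rfl⟩; exact hbound r r.2⟩ ⟨r₀, hmem⟩
  rw [hsup, hMdef]
  -- final computation
  have e1 : ((n - 1) / n * Real.exp (-1) * (ρ ^ n / n) ^ β) ^ (-(n - 1)) =
      ((n - 1) / n) ^ (-(n - 1)) * Real.exp (-1) ^ (-(n - 1)) *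
        ((ρ ^ n / n) ^ β) ^ (-(n - 1)) := by
    rw [Real.mul_rpow (by positivity) (Real.rpow_nonneg (by positivity) _),
      Real.mul_rpow (by positivity) (Real.exp_pos _).le]
  rw [e1]
  have e2 : ((n - 1) / n) ^ (-(n - 1)) = n ^ (n - 1) / (n - 1) ^ (n - 1) := by
    rw [Real.rpow_neg (by positivity), Real.div_rpow hn1.le hn0.le, inv_div]
  have e3 : Real.exp (-1) ^ (-(n - 1)) = Real.exp 1 ^ (n - 1) := by
    rw [← Real.exp_mul, ← Real.exp_mul]
    ring_nf
  have e4 : ((ρ ^ n / n) ^ β) ^ (-(n - 1)) = n / ρ ^ n := by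
    rw [← Real.rpow_mul (show (0:ℝ) ≤ ρ ^ n / n by positivity)]
    have hb : β * -(n - 1) = -1 := by rw [hβdef]; field_simp
    rw [hb, Real.rpow_neg_one, inv_div]
  rw [e2, e3, e4]
  have e5 : n ^ (n - 1) * n = n ^ n := by
    rw [← Real.rpow_add_one (ne_of_gt hn0)]
    ring_nf
  have hρn : (0 : ℝ) < ρ ^ n := Real.rpow_pos_of_pos hρ _
  have hn1n : (0 : ℝ) < (n - 1) ^ (n - 1) := Real.rpow_pos_of_pos hn1 _
  field_simp
  linear_combination e5
end

section
/- Let $N>1$, $1<p<\infty$, $\rho>0$, and let $\omega_\rho:[0,\rho]\to[0,\infty)$ be continuous with $K(s,\theta)=(s/\theta)^{N-1}\omega_\rho(s)$. Suppose the quantity $A(\alpha)=\int_\alpha^\rho\left(\int_0^\alpha K(s,\theta)ds\right)^{1/(p-1)}d\theta$ is positive for some $\alpha\in(0,\rho)$. Define $k_1(B_\rho)=\left[\int_0^\rho\left(\int_0^\theta K(s,\theta)ds\right)^{1/(p-1)}d\theta\right]^{-(p-1)}$ and $k_2(B_\rho)=\left[\max_{0\le\alpha\le\rho}A(\alpha)\right]^{-(p-1)}$.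 Then $k_1(B_\rho)<k_2(B_\rho)$. -/
open Set MeasureTheory intervalIntegral

theorem stmt_12 (N : ℕ) (hN : 1 < N) (p ρ : ℝ) (hp : 1 < p) (hρ : 0 < ρ)
    (ω : ℝ → ℝ) (hω : ContinuousOn ω (Set.Icc 0 ρ)) (hωnn : ∀ s ∈ Set.Icc (0 : ℝ) ρ, 0 ≤ ω s)
    (K : ℝ → ℝ → ℝ) (hK : ∀ s θ : ℝ, K s θ = (s / θ) ^ ((N : ℝ) - 1) * ω s)
    (A : ℝ → ℝ)
    (hA : ∀ α : ℝ, A α = ∫ θ in α..ρ, (∫ s in (0 : ℝ)..α, K s θ) ^ (1 / (p - 1)))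
    (hApos : ∃ α ∈ Set.Ioo (0 : ℝ) ρ, 0 < A α)
    (k₁ k₂ : ℝ)
    (hk₁ : k₁ = (∫ θ in (0 : ℝ)..ρ, (∫ s in (0 : ℝ)..θ, K s θ) ^ (1 / (p - 1))) ^ (-(p - 1)))
    (hk₂ : k₂ = (⨆ α : Set.Icc (0 : ℝ) ρ, A α) ^ (-(p - 1))) :
    k₁ < k₂ := by
  obtain ⟨α₀, hα₀, hAα₀⟩ := hApos
  set q : ℝ := 1 / (p - 1) with hqdef
  have hp1 : 0 < p - 1 := by linarith
  have hq : 0 < q := by positivity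
  set n : ℕ := N - 1 with hndef
  have hn1 : 1 ≤ n := by omega
  have hcast : ((N : ℝ) - 1) = (n : ℝ) := by
    rw [hndef, Nat.cast_sub hN.le]; norm_num
  -- rewrite K with natural power
  have Krw : ∀ s θ : ℝ, K s θ = (s / θ) ^ n * ω s := by
    intro s θ
    rw [hK, hcast, Real.rpow_natCast]
  -- the function f and its primitive F
  set f : ℝ → ℝ := fun s => s ^ n * ω s with hfdef
  have hfcont : ContinuousOn f (Icc 0 ρ) := (continuous_pow n).continuousOn.mul hω
  have hfnn : ∀ s ∈ Icc (0 : ℝ) ρ, 0 ≤ f s := fun s hs =>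
    mul_nonneg (pow_nonneg hs.1 n) (hωnn s hs)
  have hfint : ∀ a b : ℝ, a ∈ Icc (0 : ℝ) ρ → b ∈ Icc (0 : ℝ) ρ →
      IntervalIntegrable f volume a b := by
    intro a b ha hb
    apply (hfcont.mono ?_).intervalIntegrable
    rw [show Icc (0 : ℝ) ρ = uIcc (0 : ℝ) ρ from (uIcc_of_le hρ.le).symm]
    exact uIcc_subset_uIcc (by rwa [uIcc_of_le hρ.le]) (by rwa [uIcc_of_le hρ.le])
  set F : ℝ → ℝ := fun a => ∫ s in (0 : ℝ)..a, f s with hFdef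
  have hF0 : F 0 = 0 := integral_same
  have hFcont : ContinuousOn F (Icc 0 ρ) := by
    have := intervalIntegral.continuousOn_primitive_interval
      (f := f) (μ := volume) (a := (0 : ℝ)) (b := ρ)
      (by rw [uIcc_of_le hρ.le]; exact hfcont.integrableOn_Icc)
    rwa [uIcc_of_le hρ.le] at this
  have hFnn : ∀ a ∈ Icc (0 : ℝ) ρ, 0 ≤ F a := by
    intro a ha
    apply intervalIntegral.integral_nonneg ha.1
    intro u hu
    exact hfnn u ⟨hu.1, hu.2.trans ha.2⟩
  have hFmono : ∀ a ∈ Icc (0 : ℝ) ρ, ∀ b ∈ Icc (0 : ℝ) ρ, a ≤ b → F a ≤ F b := by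
    intro a ha b hb hab
    have hsplit : F a + ∫ s in a..b, f s = F b :=
      intervalIntegral.integral_add_adjacent_intervals
        (hfint 0 a (left_mem_Icc.2 hρ.le) ha) (hfint a b ha hb)
    have hnn : 0 ≤ ∫ s in a..b, f s := by
      apply intervalIntegral.integral_nonneg hab
      intro u hu
      exact hfnn u ⟨ha.1.trans hu.1, hu.2.trans hb.2⟩
    linarith
  -- inner integral formula
  have hinner : ∀ a θ : ℝ, 0 ≤ θ → (∫ s in (0 : ℝ)..a, K s θ) = F a / θ ^ n := by
    intro a θ hθ
    rcases eq_or_lt_of_le hθ with h0 | h0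
    · have hz : θ = 0 := h0.symm
      subst hz
      have hker : ∀ s : ℝ, K s 0 = 0 := by
        intro s
        rw [Krw, div_zero, zero_pow (by omega : n ≠ 0), zero_mul]
      simp only [hker, intervalIntegral.integral_zero, zero_pow (by omega : n ≠ 0), div_zero]
    · have : (fun s => K s θ) = fun s => f s / θ ^ n := by
        funext s
        rw [Krw, hfdef, div_pow]
        ring
      rw [this, intervalIntegral.integral_div]
  -- formula for A
  have hAeq : ∀ α ∈ Icc (0 : ℝ) ρ, A α = ∫ θ in α..ρ, (F α / θ ^ n) ^ q := by
    intro α hα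
    rw [hA]
    apply intervalIntegral.integral_congr
    intro θ hθ
    rw [uIcc_of_le hα.2] at hθ
    show (∫ s in (0:ℝ)..α, K s θ) ^ q = (F α / θ ^ n) ^ q
    rw [hinner α θ (hα.1.trans hθ.1)]
  -- the big integral
  set I : ℝ := ∫ θ in (0 : ℝ)..ρ, (F θ / θ ^ n) ^ q with hIdef
  have hIeq : (∫ θ in (0 : ℝ)..ρ, (∫ s in (0 : ℝ)..θ, K s θ) ^ q) = I := by
    apply intervalIntegral.integral_congr
    intro θ hθ
    rw [uIcc_of_le hρ.le] at hθ
    show (∫ s in (0:ℝ)..θ, K s θ) ^ q = (F θ / θ ^ n) ^ q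
    rw [hinner θ θ hθ.1]
  -- integrability of the main integrand H
  obtain ⟨C, hC⟩ := (isCompact_Icc : IsCompact (Icc (0 : ℝ) ρ)).exists_bound_of_continuousOn hω
  have hC' : ∀ s ∈ Icc (0 : ℝ) ρ, ω s ≤ C := fun s hs => (le_abs_self _).trans (hC s hs)
  have hC0 : 0 ≤ C := le_trans (hωnn 0 (left_mem_Icc.2 hρ.le))
    (hC' 0 (left_mem_Icc.2 hρ.le))
  have hFle : ∀ θ ∈ Icc (0 : ℝ) ρ, F θ ≤ C * θ * θ ^ n := by
    intro θ hθ
    have h1 : F θ ≤ ∫ _s in (0 : ℝ)..θ, C * θ ^ n := by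
      apply intervalIntegral.integral_mono_on hθ.1
        (hfint 0 θ (left_mem_Icc.2 hρ.le) hθ) intervalIntegrable_const
      intro s hs
      exact mul_le_mul (pow_le_pow_left₀ hs.1 hs.2 n)
        (hC' s ⟨hs.1, hs.2.trans hθ.2⟩) (hωnn s ⟨hs.1, hs.2.trans hθ.2⟩)
        (pow_nonneg hθ.1 n) |>.trans_eq (mul_comm _ _)
    rw [intervalIntegral.integral_const, smul_eq_mul] at h1
    calc F θ ≤ (θ - 0) * (C * θ ^ n) := h1
      _ = C * θ * θ ^ n := by ring
  have hHcont : ContinuousOn (fun θ => (F θ / θ ^ n) ^ q) (Ioc (0 : ℝ) ρ) := by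
    apply ContinuousOn.rpow_const
    · exact ((hFcont.mono Ioc_subset_Icc_self).div
        ((continuous_pow n).continuousOn) (fun θ hθ => (pow_pos hθ.1 n).ne'))
    · intro θ _; right; exact hq.le
  have hbcont : Continuous (fun θ : ℝ => (C * θ) ^ q) := by
    apply Continuous.rpow_const (continuous_const.mul continuous_id)
    intro θ; right; exact hq.le
  have hHint : IntervalIntegrable (fun θ => (F θ / θ ^ n) ^ q) volume 0 ρ := by
    rw [intervalIntegrable_iff_integrableOn_Ioc_of_le hρ.le]
    apply MeasureTheory.Integrable.mono
      (g := fun θ : ℝ => (C * θ) ^ q)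
      ((hbcont.intervalIntegrable 0 ρ).1)
      (hHcont.aestronglyMeasurable measurableSet_Ioc)
    rw [ae_restrict_iff' measurableSet_Ioc]
    filter_upwards with θ hθ
    have hθρ : θ ∈ Icc (0 : ℝ) ρ := Ioc_subset_Icc_self hθ
    have h1 : 0 ≤ F θ / θ ^ n := div_nonneg (hFnn θ hθρ) (pow_nonneg hθρ.1 n)
    have h2 : F θ / θ ^ n ≤ C * θ := by
      rw [div_le_iff₀ (pow_pos hθ.1 n)]
      exact hFle θ hθρ
    rw [Real.norm_eq_abs, Real.norm_eq_abs, abs_of_nonneg (Real.rpow_nonneg h1 q),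
      abs_of_nonneg (Real.rpow_nonneg (h1.trans h2) q)]
    exact Real.rpow_le_rpow h1 h2 hq.le
  -- integrability of the constant-numerator integrands
  have hkcont : ∀ c a b : ℝ, 0 < a → a ≤ b →
      IntervalIntegrable (fun θ => (c / θ ^ n) ^ q) volume a b := by
    intro c a b ha hab
    apply ContinuousOn.intervalIntegrable
    apply ContinuousOn.rpow_const
    · apply continuousOn_const.div ((continuous_pow n).continuousOn)
      intro θ hθ
      rw [uIcc_of_le hab] at hθ
      exact (pow_pos (ha.trans_le hθ.1) n).ne'
    · intro θ _; right; exact hq.le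
  have hkαint : ∀ α ∈ Icc (0 : ℝ) ρ,
      IntervalIntegrable (fun θ => (F α / θ ^ n) ^ q) volume α ρ := by
    intro α hα
    rcases eq_or_lt_of_le hα.1 with h0 | h0
    · simp only [← h0, hF0, zero_div, Real.zero_rpow hq.ne']
      exact intervalIntegrable_const
    · exact hkcont (F α) α ρ h0 hα.2
  -- positivity of F α₀
  have hα₀Icc : α₀ ∈ Icc (0 : ℝ) ρ := ⟨hα₀.1.le, hα₀.2.le⟩
  have hFα₀ : 0 < F α₀ := by
    rcases lt_or_ge 0 (F α₀) with h | h
    · exact h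
    · exfalso
      have hF0' : F α₀ = 0 := le_antisymm h (hFnn α₀ hα₀Icc)
      rw [hAeq α₀ hα₀Icc] at hAα₀
      simp only [hF0', zero_div, Real.zero_rpow hq.ne',
        intervalIntegral.integral_zero] at hAα₀
      exact lt_irrefl 0 hAα₀
  -- pick σ and τ by the intermediate value theorem
  have hIVT1 : Ioo (F 0) (F α₀) ⊆ F '' Ioo 0 α₀ :=
    intermediate_value_Ioo hα₀.1.le (hFcont.mono (Icc_subset_Icc le_rfl hα₀.2.le))
  obtain ⟨σ, hσmem, hFσ⟩ : ∃ σ ∈ Ioo (0 : ℝ) α₀, F σ = F α₀ / 2 := by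
    obtain ⟨σ, hσ, hFσ⟩ := hIVT1 (show F α₀ / 2 ∈ Ioo (F 0) (F α₀) by
      rw [hF0]; constructor <;> linarith)
    exact ⟨σ, hσ, hFσ⟩
  have hσIcc : σ ∈ Icc (0 : ℝ) ρ := ⟨hσmem.1.le, hσmem.2.le.trans hα₀.2.le⟩
  have hIVT2 : Ioo (F σ) (F α₀) ⊆ F '' Ioo σ α₀ :=
    intermediate_value_Ioo hσmem.2.le
      (hFcont.mono (Icc_subset_Icc hσmem.1.le hα₀.2.le))
  obtain ⟨τ, hτmem, hFτ⟩ : ∃ τ ∈ Ioo σ α₀, F τ = 3 / 4 * F α₀ := by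
    obtain ⟨τ, hτ, hFτ⟩ := hIVT2 (show 3 / 4 * F α₀ ∈ Ioo (F σ) (F α₀) by
      rw [hFσ]; constructor <;> linarith)
    exact ⟨τ, hτ, hFτ⟩
  have hτpos : 0 < τ := hσmem.1.trans hτmem.1
  have hτIcc : τ ∈ Icc (0 : ℝ) ρ := ⟨hτpos.le, hτmem.2.le.trans hα₀.2.le⟩
  -- the two gap quantities
  set δ₁ : ℝ := ∫ θ in σ..τ, (F σ / θ ^ n) ^ q with hδ₁def
  set δ₂ : ℝ := ∫ θ in α₀..ρ, ((F α₀ / θ ^ n) ^ q - (F τ / θ ^ n) ^ q) with hδ₂def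
  have hδ₁pos : 0 < δ₁ := by
    apply intervalIntegral_pos_of_pos_on (hkcont (F σ) σ τ hσmem.1 hτmem.1.le) _ hτmem.1
    intro θ hθ
    have hθ0 : 0 < θ := hσmem.1.trans hθ.1
    apply Real.rpow_pos_of_pos
    apply div_pos _ (pow_pos hθ0 n)
    rw [hFσ]; linarith
  have hδ₂pos : 0 < δ₂ := by
    apply intervalIntegral_pos_of_pos_on
      ((hkcont (F α₀) α₀ ρ hα₀.1 hα₀.2.le).sub (hkcont (F τ) α₀ ρ hα₀.1 hα₀.2.le)) _ hα₀.2
    intro θ hθ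
    have hθ0 : 0 < θ := hα₀.1.trans hθ.1
    rw [sub_pos]
    apply Real.rpow_lt_rpow
      (div_nonneg (by rw [hFτ]; linarith) (pow_pos hθ0 n).le) _ hq
    rw [div_lt_div_iff_of_pos_right (pow_pos hθ0 n), hFτ]
    linarith
  set δ : ℝ := min δ₁ δ₂ with hδdef
  have hδpos : 0 < δ := lt_min hδ₁pos hδ₂pos
  -- pointwise monotonicity helper
  have hpt : ∀ a ∈ Icc (0 : ℝ) ρ, ∀ b ∈ Icc (0 : ℝ) ρ, a ≤ b → ∀ θ : ℝ, 0 ≤ θ →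
      (F a / θ ^ n) ^ q ≤ (F b / θ ^ n) ^ q := by
    intro a ha b hb hab θ hθ
    rcases eq_or_lt_of_le hθ with h0 | h0
    · rw [← h0, zero_pow (by omega : n ≠ 0), div_zero, div_zero]
    · apply Real.rpow_le_rpow (div_nonneg (hFnn a ha) (pow_pos h0 n).le) _ hq.le
      exact (div_le_div_iff_of_pos_right (pow_pos h0 n)).2 (hFmono a ha b hb hab)
  -- the main uniform bound
  have hbound : ∀ α ∈ Icc (0 : ℝ) ρ, A α ≤ I - δ := by
    intro α hα
    rw [hAeq α hα]
    have hHsplit : (∫ θ in (0:ℝ)..α, (F θ / θ ^ n) ^ q)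
        + (∫ θ in α..ρ, (F θ / θ ^ n) ^ q) = I :=
      intervalIntegral.integral_add_adjacent_intervals
        (hHint.mono_set (by rw [uIcc_of_le hα.1, uIcc_of_le hρ.le]; exact Icc_subset_Icc le_rfl hα.2))
        (hHint.mono_set (by rw [uIcc_of_le hα.2, uIcc_of_le hρ.le]; exact Icc_subset_Icc hα.1 le_rfl))
    have hHnn : ∀ θ ∈ Icc (0:ℝ) ρ, 0 ≤ (F θ / θ ^ n) ^ q := by
      intro θ hθ
      exact Real.rpow_nonneg (div_nonneg (hFnn θ hθ) (pow_nonneg hθ.1 n)) q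
    rcases le_total α τ with hcase | hcase
    · -- case α ≤ τ : use the gap δ₂ on [α₀, ρ]
      have hαα₀ : α ≤ α₀ := hcase.trans hτmem.2.le
      have h1 : 0 ≤ ∫ θ in (0:ℝ)..α, (F θ / θ ^ n) ^ q :=
        intervalIntegral.integral_nonneg hα.1
          (fun θ hθ => hHnn θ ⟨hθ.1, hθ.2.trans hα.2⟩)
      have hHα : IntervalIntegrable (fun θ => (F θ / θ ^ n) ^ q) volume α ρ :=
        hHint.mono_set (by rw [uIcc_of_le hα.2, uIcc_of_le hρ.le]; exact Icc_subset_Icc hα.1 le_rfl)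
      have hkα : IntervalIntegrable (fun θ => (F α / θ ^ n) ^ q) volume α ρ := hkαint α hα
      have hsub : (∫ θ in α..ρ, (F θ / θ ^ n) ^ q) - (∫ θ in α..ρ, (F α / θ ^ n) ^ q)
          = ∫ θ in α..ρ, ((F θ / θ ^ n) ^ q - (F α / θ ^ n) ^ q) :=
        (intervalIntegral.integral_sub hHα hkα).symm
      have hHαint1 : IntervalIntegrable
          (fun θ => (F θ / θ ^ n) ^ q - (F α / θ ^ n) ^ q) volume α α₀ :=
        (hHα.mono_set (by rw [uIcc_of_le hαα₀, uIcc_of_le hα.2]; exact Icc_subset_Icc le_rfl hα₀.2.le)).sub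
          (hkα.mono_set (by rw [uIcc_of_le hαα₀, uIcc_of_le hα.2]; exact Icc_subset_Icc le_rfl hα₀.2.le))
      have hHαint2 : IntervalIntegrable
          (fun θ => (F θ / θ ^ n) ^ q - (F α / θ ^ n) ^ q) volume α₀ ρ :=
        (hHα.mono_set (by rw [uIcc_of_le hα₀.2.le, uIcc_of_le hα.2]; exact Icc_subset_Icc hαα₀ le_rfl)).sub
          (hkα.mono_set (by rw [uIcc_of_le hα₀.2.le, uIcc_of_le hα.2]; exact Icc_subset_Icc hαα₀ le_rfl))
      have hsplit2 : (∫ θ in α..α₀, ((F θ / θ ^ n) ^ q - (F α / θ ^ n) ^ q))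
          + (∫ θ in α₀..ρ, ((F θ / θ ^ n) ^ q - (F α / θ ^ n) ^ q))
          = ∫ θ in α..ρ, ((F θ / θ ^ n) ^ q - (F α / θ ^ n) ^ q) :=
        intervalIntegral.integral_add_adjacent_intervals hHαint1 hHαint2
      have h2 : 0 ≤ ∫ θ in α..α₀, ((F θ / θ ^ n) ^ q - (F α / θ ^ n) ^ q) := by
        apply intervalIntegral.integral_nonneg hαα₀
        intro θ hθ
        have hθIcc : θ ∈ Icc (0:ℝ) ρ := ⟨hα.1.trans hθ.1, hθ.2.trans hα₀.2.le⟩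
        exact sub_nonneg.2 (hpt α hα θ hθIcc hθ.1 θ hθIcc.1)
      have h3 : δ₂ ≤ ∫ θ in α₀..ρ, ((F θ / θ ^ n) ^ q - (F α / θ ^ n) ^ q) := by
        apply intervalIntegral.integral_mono_on hα₀.2.le
          ((hkcont (F α₀) α₀ ρ hα₀.1 hα₀.2.le).sub (hkcont (F τ) α₀ ρ hα₀.1 hα₀.2.le))
          hHαint2
        intro θ hθ
        have hθIcc : θ ∈ Icc (0:ℝ) ρ := ⟨hα₀.1.le.trans hθ.1, hθ.2⟩
        apply sub_le_sub (hpt α₀ hα₀Icc θ hθIcc hθ.1 θ hθIcc.1)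
          (hpt α hα τ hτIcc hcase θ hθIcc.1)
      have hδδ₂ : δ ≤ δ₂ := min_le_right _ _
      linarith
    · -- case τ ≤ α : use the gap δ₁ on [σ, τ]
      have hσα : σ ≤ α := hτmem.1.le.trans hcase
      have h1 : (∫ θ in α..ρ, (F α / θ ^ n) ^ q) ≤ ∫ θ in α..ρ, (F θ / θ ^ n) ^ q := by
        apply intervalIntegral.integral_mono_on hα.2 (hkαint α hα)
          (hHint.mono_set (by rw [uIcc_of_le hα.2, uIcc_of_le hρ.le]; exact Icc_subset_Icc hα.1 le_rfl))
        intro θ hθ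
        have hθIcc : θ ∈ Icc (0:ℝ) ρ := ⟨hα.1.trans hθ.1, hθ.2⟩
        exact hpt α hα θ hθIcc hθ.1 θ hθIcc.1
      -- split [0,α] into [0,σ], [σ,τ], [τ,α]
      have hi1 : IntervalIntegrable (fun θ => (F θ / θ ^ n) ^ q) volume 0 σ :=
        hHint.mono_set (by rw [uIcc_of_le hσIcc.1, uIcc_of_le hρ.le]; exact Icc_subset_Icc le_rfl hσIcc.2)
      have hi2 : IntervalIntegrable (fun θ => (F θ / θ ^ n) ^ q) volume σ τ :=
        hHint.mono_set (by rw [uIcc_of_le hτmem.1.le, uIcc_of_le hρ.le]; exact Icc_subset_Icc hσIcc.1 hτIcc.2)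
      have hi3 : IntervalIntegrable (fun θ => (F θ / θ ^ n) ^ q) volume τ α :=
        hHint.mono_set (by rw [uIcc_of_le hcase, uIcc_of_le hρ.le]; exact Icc_subset_Icc hτIcc.1 hα.2)
      have hsplit3 : (∫ θ in (0:ℝ)..σ, (F θ / θ ^ n) ^ q) + (∫ θ in σ..τ, (F θ / θ ^ n) ^ q)
          = ∫ θ in (0:ℝ)..τ, (F θ / θ ^ n) ^ q :=
        intervalIntegral.integral_add_adjacent_intervals hi1 hi2
      have hsplit4 : (∫ θ in (0:ℝ)..τ, (F θ / θ ^ n) ^ q) + (∫ θ in τ..α, (F θ / θ ^ n) ^ q)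
          = ∫ θ in (0:ℝ)..α, (F θ / θ ^ n) ^ q :=
        intervalIntegral.integral_add_adjacent_intervals (hi1.trans hi2) hi3
      have h2 : 0 ≤ ∫ θ in (0:ℝ)..σ, (F θ / θ ^ n) ^ q :=
        intervalIntegral.integral_nonneg hσIcc.1
          (fun θ hθ => hHnn θ ⟨hθ.1, hθ.2.trans hσIcc.2⟩)
      have h3 : 0 ≤ ∫ θ in τ..α, (F θ / θ ^ n) ^ q :=
        intervalIntegral.integral_nonneg hcase
          (fun θ hθ => hHnn θ ⟨hτpos.le.trans hθ.1, hθ.2.trans hα.2⟩)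
      have h4 : δ₁ ≤ ∫ θ in σ..τ, (F θ / θ ^ n) ^ q := by
        apply intervalIntegral.integral_mono_on hτmem.1.le
          (hkcont (F σ) σ τ hσmem.1 hτmem.1.le) hi2
        intro θ hθ
        have hθIcc : θ ∈ Icc (0:ℝ) ρ := ⟨hσIcc.1.trans hθ.1, hθ.2.trans hτIcc.2⟩
        exact hpt σ hσIcc θ hθIcc hθ.1 θ hθIcc.1
      have hδδ₁ : δ ≤ δ₁ := min_le_left _ _
      linarith
  -- conclude
  haveI : Nonempty (Icc (0:ℝ) ρ) := ⟨⟨0, left_mem_Icc.2 hρ.le⟩⟩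
  have hbdd : BddAbove (Set.range fun α : Icc (0:ℝ) ρ => A α) := by
    refine ⟨I - δ, ?_⟩
    rintro x ⟨⟨a, ha⟩, rfl⟩
    exact hbound a ha
  set M : ℝ := ⨆ α : Icc (0:ℝ) ρ, A α with hMdef
  have hMle : M ≤ I - δ := ciSup_le fun ⟨a, ha⟩ => hbound a ha
  have hMge : A α₀ ≤ M := le_ciSup hbdd ⟨α₀, hα₀Icc⟩
  have hMpos : 0 < M := hAα₀.trans_le hMge
  have hMI : M < I := hMle.trans_lt (by linarith)
  rw [hk₁, hk₂, hIeq]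
  exact Real.rpow_lt_rpow_of_neg hMpos hMI (by linarith)
end

section
/- Let $N>1$, $1<p<\infty$, $\rho>0$, $t\in(0,\rho)$, $0<\delta<M$, $0<k_2\delta^{p-1}\le k_1M^{p-1}$, and let $K(s,\theta)=(s/\theta)^{N-1}\omega_\rho(s)$ with $\omega_\rho\ge 0$ continuous. Suppose $\delta=\delta\int_t^\rho(k_2\int_0^t K(s,\theta)ds)^{1/(p-1)}d\theta$ (i.e. $\int_t^\rho(k_2\int_0^tK(s,\theta)ds)^{1/(p-1)}d\theta=1$). Define $\Psi_\delta(r)=\delta$ for $0\le r\le t$ and $\Psi_\delta(r)=\delta\int_r^\rho(k_2\int_0^tK(s,\theta)ds)^{1/(p-1)}d\theta$ for $t<r\le\rho$, and $\Phi_M(r)=M\int_r^\rho(k_1\int_0^\theta K(s,\theta)ds)^{1/(p-1)}d\theta$. Then $0\le\Psi_\delta(r)\le\Phi_M(r)$ for all $r\in[0,\rho]$. -/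
open MeasureTheory Set intervalIntegral

theorem stmt_14 (N : ℕ) (hN : 1 < N) (p ρ t δ M k₁ k₂ : ℝ)
    (hp : 1 < p) (hρ : 0 < ρ) (ht : t ∈ Set.Ioo (0 : ℝ) ρ)
    (hδ : 0 < δ) (hδM : δ < M)
    (hk₂ : 0 < k₂ * δ ^ (p - 1)) (hk : k₂ * δ ^ (p - 1) ≤ k₁ * M ^ (p - 1))
    (ω : ℝ → ℝ) (hω : ContinuousOn ω (Set.Icc 0 ρ)) (hωnn : ∀ s ∈ Set.Icc (0 : ℝ) ρ, 0 ≤ ω s)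
    (K : ℝ → ℝ → ℝ) (hK : ∀ s θ : ℝ, K s θ = (s / θ) ^ ((N : ℝ) - 1) * ω s)
    (hnorm : (∫ θ in t..ρ, (k₂ * ∫ s in (0 : ℝ)..t, K s θ) ^ (1 / (p - 1))) = 1)
    (Ψ Φ : ℝ → ℝ)
    (hΨ₁ : ∀ r : ℝ, r ≤ t → Ψ r = δ)
    (hΨ₂ : ∀ r : ℝ, t < r →
      Ψ r = δ * ∫ θ in r..ρ, (k₂ * ∫ s in (0 : ℝ)..t, K s θ) ^ (1 / (p - 1)))
    (hΦ : ∀ r : ℝ,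
      Φ r = M * ∫ θ in r..ρ, (k₁ * ∫ s in (0 : ℝ)..θ, K s θ) ^ (1 / (p - 1))) :
    ∀ r ∈ Set.Icc (0 : ℝ) ρ, 0 ≤ Ψ r ∧ Ψ r ≤ Φ r := by
  obtain ⟨ht0, htρ⟩ := ht
  set n : ℝ := (N : ℝ) - 1 with hn_def
  have hn : 0 < n := by
    have h2 : (2 : ℝ) ≤ (N : ℝ) := by exact_mod_cast hN
    simp only [hn_def]; linarith
  set c : ℝ := 1 / (p - 1) with hc_def
  have hp1 : 0 < p - 1 := by linarith
  have hc : 0 < c := by positivity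
  have hM : 0 < M := hδ.trans hδM
  have hδp : 0 < δ ^ (p - 1) := Real.rpow_pos_of_pos hδ _
  have hMp : 0 < M ^ (p - 1) := Real.rpow_pos_of_pos hM _
  have hk₂pos : 0 < k₂ := by nlinarith
  have hk₁pos : 0 < k₁ := by nlinarith
  -- continuity of K in s
  have hKcont : ∀ θ : ℝ, ContinuousOn (fun s => K s θ) (Icc 0 ρ) := by
    intro θ
    have h1 : Continuous fun s : ℝ => (s / θ) ^ n :=
      (continuous_id.div_const θ).rpow_const (fun _ => Or.inr hn.le)
    simp only [hK]
    exact h1.continuousOn.mul hω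
  have hKint : ∀ θ a b : ℝ, a ∈ Icc (0:ℝ) ρ → b ∈ Icc (0:ℝ) ρ →
      IntervalIntegrable (fun s => K s θ) volume a b := fun θ a b ha hb =>
    ((hKcont θ).mono (uIcc_subset_Icc ha hb)).intervalIntegrable
  -- nonnegativity of inner integrals
  have hI₂nn : ∀ θ ∈ Icc (0:ℝ) ρ, 0 ≤ ∫ s in (0:ℝ)..θ, K s θ := by
    intro θ hθ
    apply intervalIntegral.integral_nonneg hθ.1
    intro s hs
    rw [hK]
    exact mul_nonneg (Real.rpow_nonneg (div_nonneg hs.1 hθ.1) _)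
      (hωnn s ⟨hs.1, hs.2.trans hθ.2⟩)
  have hI₁nn : ∀ θ : ℝ, 0 ≤ θ → 0 ≤ ∫ s in (0:ℝ)..t, K s θ := by
    intro θ hθ
    apply intervalIntegral.integral_nonneg ht0.le
    intro s hs
    rw [hK]
    exact mul_nonneg (Real.rpow_nonneg (div_nonneg hs.1 hθ) _)
      (hωnn s ⟨hs.1, hs.2.trans htρ.le⟩)
  have hI₁₂ : ∀ θ ∈ Icc t ρ, (∫ s in (0:ℝ)..t, K s θ) ≤ ∫ s in (0:ℝ)..θ, K s θ := by
    intro θ hθ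
    have hθ0 : 0 < θ := ht0.trans_le hθ.1
    have htI : t ∈ Icc (0:ℝ) ρ := ⟨ht0.le, htρ.le⟩
    have hθI : θ ∈ Icc (0:ℝ) ρ := ⟨hθ0.le, hθ.2⟩
    have h0I : (0:ℝ) ∈ Icc (0:ℝ) ρ := ⟨le_rfl, hρ.le⟩
    have hadd := intervalIntegral.integral_add_adjacent_intervals
      (hKint θ 0 t h0I htI) (hKint θ t θ htI hθI)
    have hnn : 0 ≤ ∫ s in t..θ, K s θ := by
      apply intervalIntegral.integral_nonneg hθ.1
      intro s hs
      rw [hK]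
      exact mul_nonneg (Real.rpow_nonneg (div_nonneg (ht0.le.trans hs.1) hθ0.le) _)
        (hωnn s ⟨ht0.le.trans hs.1, hs.2.trans hθ.2⟩)
    linarith
  -- key pointwise inequality
  have hδc : (δ ^ (p - 1)) ^ c = δ := by
    rw [← Real.rpow_mul hδ.le, hc_def, mul_one_div_cancel hp1.ne', Real.rpow_one]
  have hMc : (M ^ (p - 1)) ^ c = M := by
    rw [← Real.rpow_mul hM.le, hc_def, mul_one_div_cancel hp1.ne', Real.rpow_one]
  have key : ∀ θ ∈ Icc t ρ,
      δ * (k₂ * ∫ s in (0:ℝ)..t, K s θ) ^ c ≤ M * (k₁ * ∫ s in (0:ℝ)..θ, K s θ) ^ c := by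
    intro θ hθ
    have hθ0 : 0 < θ := ht0.trans_le hθ.1
    set I₁ := ∫ s in (0:ℝ)..t, K s θ
    set I₂ := ∫ s in (0:ℝ)..θ, K s θ
    have h1 : 0 ≤ I₁ := hI₁nn θ hθ0.le
    have h2 : I₁ ≤ I₂ := hI₁₂ θ hθ
    have e1 : δ * (k₂ * I₁) ^ c = (k₂ * δ ^ (p - 1) * I₁) ^ c := by
      have : (k₂ * δ ^ (p - 1) * I₁ : ℝ) = δ ^ (p - 1) * (k₂ * I₁) := by ring
      rw [this, Real.mul_rpow hδp.le (mul_nonneg hk₂pos.le h1), hδc]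
    have e2 : M * (k₁ * I₂) ^ c = (k₁ * M ^ (p - 1) * I₂) ^ c := by
      have h2' : 0 ≤ I₂ := h1.trans h2
      have : (k₁ * M ^ (p - 1) * I₂ : ℝ) = M ^ (p - 1) * (k₁ * I₂) := by ring
      rw [this, Real.mul_rpow hMp.le (mul_nonneg hk₁pos.le h2'), hMc]
    rw [e1, e2]
    apply Real.rpow_le_rpow (by positivity) _ hc.le
    exact mul_le_mul hk h2 h1 (by positivity)
  -- the primitive u
  set u : ℝ → ℝ := fun x => ∫ s in (0:ℝ)..x, s ^ n * ω s with hu_def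
  have hfcont : ContinuousOn (fun s : ℝ => s ^ n * ω s) (Icc 0 ρ) :=
    ((continuous_id.rpow_const (fun _ => Or.inr hn.le)).continuousOn).mul hω
  have hucont : ContinuousOn u (Icc 0 ρ) := by
    have := intervalIntegral.continuousOn_primitive_interval
      (f := fun s : ℝ => s ^ n * ω s) (a := 0) (b := ρ) (μ := volume)
      (by rw [uIcc_of_le hρ.le]; exact hfcont.integrableOn_Icc)
    rwa [uIcc_of_le hρ.le] at this
  have hform : ∀ θ x : ℝ, 0 < θ → 0 ≤ x →
      (∫ s in (0:ℝ)..x, K s θ) = (θ ^ n)⁻¹ * u x := by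
    intro θ x hθ hx
    rw [hu_def, ← intervalIntegral.integral_const_mul]
    apply intervalIntegral.integral_congr
    intro s hs
    rw [uIcc_of_le hx] at hs
    simp only
    rw [hK, Real.div_rpow hs.1 hθ.le]
    ring
  -- integrability of g on [t, ρ]
  have hgcont : ContinuousOn (fun θ => (k₂ * ∫ s in (0:ℝ)..t, K s θ) ^ c) (Icc t ρ) := by
    have hinv : ContinuousOn (fun θ : ℝ => (θ ^ n)⁻¹) (Icc t ρ) :=
      ((continuous_id.rpow_const (fun _ => Or.inr hn.le)).continuousOn).inv₀
        (fun θ hθ => (Real.rpow_pos_of_pos (ht0.trans_le hθ.1) n).ne')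
    have hF : ContinuousOn (fun θ : ℝ => (k₂ * ((θ ^ n)⁻¹ * u t)) ^ c) (Icc t ρ) :=
      (continuousOn_const.mul (hinv.mul continuousOn_const)).rpow_const
        (fun _ _ => Or.inr hc.le)
    apply hF.congr
    intro θ hθ
    simp only
    rw [hform θ t (ht0.trans_le hθ.1) ht0.le]
  -- integrability of h on [0, ρ]
  set W : ℝ := ∫ s in (0:ℝ)..ρ, ω s with hW_def
  have hωint : ∀ a b : ℝ, a ∈ Icc (0:ℝ) ρ → b ∈ Icc (0:ℝ) ρ →
      IntervalIntegrable ω volume a b := fun a b ha hb =>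
    (hω.mono (uIcc_subset_Icc ha hb)).intervalIntegrable
  have hHint : IntervalIntegrable (fun θ => (k₁ * ∫ s in (0:ℝ)..θ, K s θ) ^ c) volume 0 ρ := by
    rw [intervalIntegrable_iff_integrableOn_Ioc_of_le hρ.le]
    have heq : EqOn (fun θ : ℝ => (k₁ * ((θ ^ n)⁻¹ * u θ)) ^ c)
        (fun θ => (k₁ * ∫ s in (0:ℝ)..θ, K s θ) ^ c) (Ioc 0 ρ) := by
      intro θ hθ
      simp only
      rw [hform θ θ hθ.1 hθ.1.le]
    apply IntegrableOn.congr_fun _ heq measurableSet_Ioc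
    -- IntegrableOn formula on Ioc 0 ρ
    have hinv : ContinuousOn (fun θ : ℝ => (θ ^ n)⁻¹) (Ioc 0 ρ) :=
      ((continuous_id.rpow_const (fun _ => Or.inr hn.le)).continuousOn).inv₀
        (fun θ hθ => (Real.rpow_pos_of_pos hθ.1 n).ne')
    have hcont : ContinuousOn (fun θ : ℝ => (k₁ * ((θ ^ n)⁻¹ * u θ)) ^ c) (Ioc 0 ρ) :=
      (continuousOn_const.mul (hinv.mul (hucont.mono Ioc_subset_Icc_self))).rpow_const
        (fun _ _ => Or.inr hc.le)
    have hbound : ∀ θ ∈ Ioc (0:ℝ) ρ, ‖(k₁ * ((θ ^ n)⁻¹ * u θ)) ^ c‖ ≤ (k₁ * W) ^ c := by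
      intro θ hθ
      have hθI : θ ∈ Icc (0:ℝ) ρ := ⟨hθ.1.le, hθ.2⟩
      have hθn : 0 < θ ^ n := Real.rpow_pos_of_pos hθ.1 n
      have hunn : 0 ≤ u θ := by
        apply intervalIntegral.integral_nonneg hθ.1.le
        intro s hs
        exact mul_nonneg (Real.rpow_nonneg hs.1 _) (hωnn s ⟨hs.1, hs.2.trans hθ.2⟩)
      have hub : u θ ≤ θ ^ n * ∫ s in (0:ℝ)..θ, ω s := by
        rw [← intervalIntegral.integral_const_mul]
        apply intervalIntegral.integral_mono_on hθ.1.le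
          ((hfcont.mono (uIcc_subset_Icc ⟨le_rfl, hρ.le⟩ hθI)).intervalIntegrable)
          (((continuousOn_const.mul hω).mono
            (uIcc_subset_Icc ⟨le_rfl, hρ.le⟩ hθI)).intervalIntegrable)
        intro s hs
        exact mul_le_mul_of_nonneg_right (Real.rpow_le_rpow hs.1 hs.2 hn.le)
          (hωnn s ⟨hs.1, hs.2.trans hθ.2⟩)
      have hWθ : (∫ s in (0:ℝ)..θ, ω s) ≤ W := by
        have hadd := intervalIntegral.integral_add_adjacent_intervals
          (hωint 0 θ ⟨le_rfl, hρ.le⟩ hθI) (hωint θ ρ hθI ⟨hρ.le, le_rfl⟩)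
        have hnn : 0 ≤ ∫ s in θ..ρ, ω s :=
          intervalIntegral.integral_nonneg hθ.2
            (fun s hs => hωnn s ⟨hθ.1.le.trans hs.1, hs.2⟩)
        rw [hW_def]; linarith
      have hWnn : 0 ≤ W := by
        have h0 : 0 ≤ ∫ s in (0:ℝ)..θ, ω s :=
          intervalIntegral.integral_nonneg hθ.1.le
            (fun s hs => hωnn s ⟨hs.1, hs.2.trans hθ.2⟩)
        linarith
      have hinner : (θ ^ n)⁻¹ * u θ ≤ W := by
        have h1 : (θ ^ n)⁻¹ * u θ ≤ (θ ^ n)⁻¹ * (θ ^ n * ∫ s in (0:ℝ)..θ, ω s) :=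
          mul_le_mul_of_nonneg_left hub (inv_nonneg.mpr hθn.le)
        rw [inv_mul_cancel_left₀ hθn.ne'] at h1
        linarith
      have hinnn : 0 ≤ (θ ^ n)⁻¹ * u θ := mul_nonneg (inv_nonneg.mpr hθn.le) hunn
      rw [Real.norm_eq_abs, abs_of_nonneg (Real.rpow_nonneg (by positivity) _)]
      exact Real.rpow_le_rpow (by positivity)
        (mul_le_mul_of_nonneg_left hinner hk₁pos.le) hc.le
    refine ⟨hcont.aestronglyMeasurable measurableSet_Ioc, ?_⟩
    apply MeasureTheory.HasFiniteIntegral.restrict_of_bounded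
      (C := (k₁ * W) ^ c) measure_Ioc_lt_top
    exact (ae_restrict_iff' measurableSet_Ioc).mpr (.of_forall hbound)
  -- nonnegativity of integrands
  have hgnn : ∀ θ : ℝ, 0 ≤ θ → 0 ≤ (k₂ * ∫ s in (0:ℝ)..t, K s θ) ^ c := fun θ hθ =>
    Real.rpow_nonneg (mul_nonneg hk₂pos.le (hI₁nn θ hθ)) _
  have hhnn : ∀ θ ∈ Icc (0:ℝ) ρ, 0 ≤ (k₁ * ∫ s in (0:ℝ)..θ, K s θ) ^ c := fun θ hθ =>
    Real.rpow_nonneg (mul_nonneg hk₁pos.le (hI₂nn θ hθ)) _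
  -- main argument
  intro r hr
  have huIcc : ∀ a b : ℝ, a ∈ Icc (0:ℝ) ρ → b ∈ Icc (0:ℝ) ρ → uIcc a b ⊆ uIcc (0:ℝ) ρ := by
    intro a b ha hb
    rw [uIcc_of_le hρ.le]
    exact uIcc_subset_Icc ha hb
  rcases le_or_gt r t with hrt | hrt
  · refine ⟨by rw [hΨ₁ r hrt]; exact hδ.le, ?_⟩
    rw [hΨ₁ r hrt, hΦ r]
    have hH1 : IntervalIntegrable (fun θ => (k₁ * ∫ s in (0:ℝ)..θ, K s θ) ^ c) volume r t :=
      hHint.mono_set (huIcc r t hr ⟨ht0.le, htρ.le⟩)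
    have hH2 : IntervalIntegrable (fun θ => (k₁ * ∫ s in (0:ℝ)..θ, K s θ) ^ c) volume t ρ :=
      hHint.mono_set (huIcc t ρ ⟨ht0.le, htρ.le⟩ ⟨hρ.le, le_rfl⟩)
    have hG : IntervalIntegrable (fun θ => (k₂ * ∫ s in (0:ℝ)..t, K s θ) ^ c) volume t ρ :=
      ((hgcont.mono (uIcc_subset_Icc ⟨le_rfl, htρ.le⟩ ⟨htρ.le, le_rfl⟩)).intervalIntegrable)
    have step2 : (∫ θ in t..ρ, δ * (k₂ * ∫ s in (0:ℝ)..t, K s θ) ^ c)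
        ≤ ∫ θ in t..ρ, M * (k₁ * ∫ s in (0:ℝ)..θ, K s θ) ^ c :=
      intervalIntegral.integral_mono_on htρ.le (hG.const_mul δ) (hH2.const_mul M) key
    have step3 : (∫ θ in t..ρ, M * (k₁ * ∫ s in (0:ℝ)..θ, K s θ) ^ c)
        ≤ ∫ θ in r..ρ, M * (k₁ * ∫ s in (0:ℝ)..θ, K s θ) ^ c := by
      have hadd := intervalIntegral.integral_add_adjacent_intervals
        (hH1.const_mul M) (hH2.const_mul M)
      have hnn : 0 ≤ ∫ θ in r..t, M * (k₁ * ∫ s in (0:ℝ)..θ, K s θ) ^ c :=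
        intervalIntegral.integral_nonneg hrt
          (fun θ hθ => mul_nonneg hM.le (hhnn θ ⟨hr.1.trans hθ.1, hθ.2.trans htρ.le⟩))
      linarith
    have step1 : δ = ∫ θ in t..ρ, δ * (k₂ * ∫ s in (0:ℝ)..t, K s θ) ^ c := by
      rw [intervalIntegral.integral_const_mul, hnorm, mul_one]
    rw [← intervalIntegral.integral_const_mul]
    linarith
  · have hGr : IntervalIntegrable (fun θ => (k₂ * ∫ s in (0:ℝ)..t, K s θ) ^ c) volume r ρ :=
      ((hgcont.mono (uIcc_subset_Icc ⟨hrt.le, hr.2⟩ ⟨htρ.le, le_rfl⟩)).intervalIntegrable)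
    have hHr : IntervalIntegrable (fun θ => (k₁ * ∫ s in (0:ℝ)..θ, K s θ) ^ c) volume r ρ :=
      hHint.mono_set (huIcc r ρ hr ⟨hρ.le, le_rfl⟩)
    constructor
    · rw [hΨ₂ r hrt]
      apply mul_nonneg hδ.le
      apply intervalIntegral.integral_nonneg hr.2
      intro θ hθ
      exact hgnn θ (hr.1.trans hθ.1)
    · rw [hΨ₂ r hrt, hΦ r, ← intervalIntegral.integral_const_mul,
        ← intervalIntegral.integral_const_mul]
      apply intervalIntegral.integral_mono_on hr.2 (hGr.const_mul δ) (hHr.const_mul M)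
      intro θ hθ
      exact key θ ⟨hrt.le.trans hθ.1, hθ.2⟩
end
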